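/- Axiom (R9) (the distributive law for converse) is independent of the remaining Tarski axioms: in the algebra A9 obtained from the complex algebra of Z/3Z by redefining converse to fix the singletons {1} and {2} and to interchange the doubletons {0,1} and {0,2} (fixing all other elements), and redefining relative multiplication by X;Y = X⁻¹∘Y whenever X is a singleton and Y a doubleton (where ∘ is complex multiplication in Z/3Z, all other products unchanged), axioms (R1)-(R8) and (R10) hold but (R9) fails, since ({0}+{2})⁻ = {0,1} ≠ {0,2} = {0}⁻+{2}⁻. -/

import Mathlib

/-- Complex multiplication in the complex algebra of the group Z/3Z. -/
def cmulZ (X Y : Set (ZMod 3)) : Set (ZMod 3) := {z | ∃ x ∈ X, ∃ y ∈ Y, z = x + y}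

/-- Complex inverse in the complex algebra of the group Z/3Z. -/
def cinvZ (X : Set (ZMod 3)) : Set (ZMod 3) := {z | ∃ x ∈ X, z = -x}

/-- Converse in the algebra A9: it maps every element to itself, except that it
interchanges the two doubletons {0,1} and {0,2} (in particular it fixes the
singletons {1} and {2}). -/
noncomputable def convA9 (X : Set (ZMod 3)) : Set (ZMod 3) := by
  classical
  exact if X = {0, 1} then {0, 2} else if X = {0, 2} then {0, 1} else X

/-- Relative multiplication in the algebra A9: X;Y = X⁻¹∘Y whenever X is a
singleton and Y a doubleton, and X;Y = X∘Y otherwise. -/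
noncomputable def mulA9 (X Y : Set (ZMod 3)) : Set (ZMod 3) := by
  classical
  exact if (∃ a, X = {a}) ∧ (∃ a b, a ≠ b ∧ Y = {a, b}) then cmulZ (cinvZ X) Y
    else cmulZ X Y

def cmulF (s t : Finset (ZMod 3)) : Finset (ZMod 3) := (s ×ˢ t).image fun p => p.1 + p.2
def cinvF (s : Finset (ZMod 3)) : Finset (ZMod 3) := s.image fun x => -x
def convF (s : Finset (ZMod 3)) : Finset (ZMod 3) :=
  if s = {0, 1} then {0, 2} else if s = {0, 2} then {0, 1} else s
def mulF (s t : Finset (ZMod 3)) : Finset (ZMod 3) :=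
  if (∃ a, s = {a}) ∧ (∃ a b, a ≠ b ∧ t = {a, b}) then cmulF (cinvF s) t else cmulF s t

lemma coe_cmul (s t : Finset (ZMod 3)) : cmulZ ↑s ↑t = ↑(cmulF s t) := by
  ext z
  simp [cmulZ, cmulF, Finset.mem_image, Finset.mem_product, eq_comm]
  rw [Set.mem_add]; constructor <;> rintro ⟨x, hx, y, hy, h⟩ <;> exact ⟨x, hx, y, hy, h.symm⟩

lemma coe_cinv (s : Finset (ZMod 3)) : cinvZ ↑s = ↑(cinvF s) := by
  ext z
  simp only [cinvZ, cinvF, Finset.coe_image, Set.mem_image, Finset.mem_coe, Set.mem_setOf_eq]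
  constructor
  · rintro ⟨x, hx, rfl⟩; exact ⟨x, hx, rfl⟩
  · rintro ⟨x, hx, rfl⟩; exact ⟨x, hx, rfl⟩

lemma coe_pair_iff (s : Finset (ZMod 3)) (a b : ZMod 3) :
    (↑s : Set (ZMod 3)) = {a, b} ↔ s = {a, b} := by
  rw [show ({a, b} : Set (ZMod 3)) = ↑({a, b} : Finset (ZMod 3)) by simp, Finset.coe_inj]

lemma coe_sing_iff (s : Finset (ZMod 3)) (a : ZMod 3) :
    (↑s : Set (ZMod 3)) = {a} ↔ s = {a} := by
  rw [show ({a} : Set (ZMod 3)) = ↑({a} : Finset (ZMod 3)) by simp, Finset.coe_inj]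

lemma coe_conv (s : Finset (ZMod 3)) : convA9 ↑s = ↑(convF s) := by
  unfold convA9 convF
  simp only [coe_pair_iff]
  split_ifs <;> simp

lemma coe_mul (s t : Finset (ZMod 3)) : mulA9 ↑s ↑t = ↑(mulF s t) := by
  unfold mulA9 mulF
  simp only [coe_sing_iff, coe_pair_iff]
  split_ifs with h
  · rw [coe_cinv, coe_cmul]
  · rw [coe_cmul]

lemma exists_fs (X : Set (ZMod 3)) : ∃ s : Finset (ZMod 3), X = ↑s :=
  ⟨(Set.toFinite X).toFinset, ((Set.toFinite X).coe_toFinset).symm⟩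

lemma coe0 : ({0} : Set (ZMod 3)) = ↑({0} : Finset (ZMod 3)) := by simp
lemma coe2 : ({2} : Set (ZMod 3)) = ↑({2} : Finset (ZMod 3)) := by simp
lemma coe01 : ({0, 1} : Set (ZMod 3)) = ↑({0, 1} : Finset (ZMod 3)) := by simp
lemma coe02 : ({0, 2} : Set (ZMod 3)) = ↑({0, 2} : Finset (ZMod 3)) := by simp

/-- Axiom (R9) (the distributive law for converse) is independent of the
remaining Tarski axioms: in the algebra A9 (union as +, set complement as -,
mulA9 as ;, convA9 as converse, {0} as 1'), axioms (R1)-(R8) and (R10) all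
hold but (R9) fails, since ({0}+{2})⁻ = {0,1} ≠ {0,2} = {0}⁻+{2}⁻. -/
theorem R9_independent :
    (∀ X Y : Set (ZMod 3), X ∪ Y = Y ∪ X) ∧
    (∀ X Y Z : Set (ZMod 3), X ∪ (Y ∪ Z) = (X ∪ Y) ∪ Z) ∧
    (∀ X Y : Set (ZMod 3), (Xᶜ ∪ Y)ᶜ ∪ (Xᶜ ∪ Yᶜ)ᶜ = X) ∧
    (∀ X Y Z : Set (ZMod 3), mulA9 X (mulA9 Y Z) = mulA9 (mulA9 X Y) Z) ∧
    (∀ X : Set (ZMod 3), mulA9 X {0} = X) ∧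
    (∀ X : Set (ZMod 3), convA9 (convA9 X) = X) ∧
    (∀ X Y : Set (ZMod 3), convA9 (mulA9 X Y) = mulA9 (convA9 Y) (convA9 X)) ∧
    (∀ X Y Z : Set (ZMod 3), mulA9 (X ∪ Y) Z = mulA9 X Z ∪ mulA9 Y Z) ∧
    (∀ X Y : Set (ZMod 3), mulA9 (convA9 X) (mulA9 X Y)ᶜ ∪ Yᶜ = Yᶜ) ∧
    ¬ (∀ X Y : Set (ZMod 3), convA9 (X ∪ Y) = convA9 X ∪ convA9 Y) ∧
    convA9 (({0} : Set (ZMod 3)) ∪ {2}) = {0, 1} ∧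
    convA9 ({0} : Set (ZMod 3)) ∪ convA9 {2} = {0, 2} := by
  refine ⟨fun X Y => Set.union_comm X Y, fun X Y Z => (Set.union_assoc X Y Z).symm,
    ?_, ?_, ?_, ?_, ?_, ?_, ?_, ?_, ?_, ?_⟩
  · intro X Y
    obtain ⟨s, rfl⟩ := exists_fs X
    obtain ⟨t, rfl⟩ := exists_fs Y
    simp only [← Finset.coe_compl, ← Finset.coe_union, Finset.coe_inj]
    revert s t
    decide
  · intro X Y Z
    obtain ⟨s, rfl⟩ := exists_fs X
    obtain ⟨t, rfl⟩ := exists_fs Y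
    obtain ⟨u, rfl⟩ := exists_fs Z
    rw [coe_mul, coe_mul, coe_mul, coe_mul, Finset.coe_inj]
    revert s t u
    decide
  · intro X
    obtain ⟨s, rfl⟩ := exists_fs X
    rw [coe0, coe_mul, Finset.coe_inj]
    revert s
    decide
  · intro X
    obtain ⟨s, rfl⟩ := exists_fs X
    rw [coe_conv, coe_conv, Finset.coe_inj]
    revert s
    decide
  · intro X Y
    obtain ⟨s, rfl⟩ := exists_fs X
    obtain ⟨t, rfl⟩ := exists_fs Y
    rw [coe_mul, coe_conv, coe_conv, coe_conv, coe_mul, Finset.coe_inj]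
    revert s t
    decide
  · intro X Y Z
    obtain ⟨s, rfl⟩ := exists_fs X
    obtain ⟨t, rfl⟩ := exists_fs Y
    obtain ⟨u, rfl⟩ := exists_fs Z
    rw [← Finset.coe_union, coe_mul, coe_mul, coe_mul, ← Finset.coe_union, Finset.coe_inj]
    revert s t u
    decide
  · intro X Y
    obtain ⟨s, rfl⟩ := exists_fs X
    obtain ⟨t, rfl⟩ := exists_fs Y
    rw [coe_conv, coe_mul, ← Finset.coe_compl, coe_mul, ← Finset.coe_compl,
      ← Finset.coe_union, Finset.coe_inj]
    revert s t
    decide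
  · intro h
    have h2 := h ↑({0} : Finset (ZMod 3)) ↑({2} : Finset (ZMod 3))
    rw [← Finset.coe_union, coe_conv, coe_conv, coe_conv, ← Finset.coe_union,
      Finset.coe_inj] at h2
    revert h2
    decide
  · rw [coe0, coe2, ← Finset.coe_union, coe_conv, coe01, Finset.coe_inj]
    decide
  · rw [coe02, coe0, coe2, coe_conv, coe_conv, ← Finset.coe_union, Finset.coe_inj]
    decide
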